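/- Let m ≥ 1 and let y, z, y', z' ⊆ S with |y| = |z| = |y'| = |z'| = m. Then there exists a permutation σ of S with σ(x0) = x0 (setwise), σ(y) = y' and σ(z) = z' if and only if ρ(y,z) = ρ(y',z'). In other words, the sets X_{(m,m)}^{(i,j,t,p)} := { (y,z) : |y| = |z| = m, ρ(y,z) = (i,j,t,p) }, for (i,j,t,p) ∈ I_{(m,m)}, are exactly the orbits of the setwise stabilizer of x0 in Sym(S) acting diagonally on pairs of m-subsets of S. -/
import Mathlib

open Finset

lemma sys {α : Type*} [DecidableEq α] [Fintype α] (A B C : Finset α) :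
    (A ∩ B ∩ C).card + ((A ∩ B) \ C).card = (A ∩ B).card ∧
    (A ∩ B ∩ C).card + ((A ∩ C) \ B).card = (A ∩ C).card ∧
    (A ∩ B ∩ C).card + ((B ∩ C) \ A).card = (B ∩ C).card ∧
    A.card + (A ∩ B ∩ C).card = (A ∩ B).card + (A ∩ C).card + (A \ (B ∪ C)).card ∧
    B.card + (A ∩ B ∩ C).card = (A ∩ B).card + (B ∩ C).card + (B \ (A ∪ C)).card ∧
    C.card + (A ∩ B ∩ C).card = (A ∩ C).card + (B ∩ C).card + (C \ (A ∪ B)).card ∧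
    Fintype.card α + (A ∩ B).card + (A ∩ C).card + (B ∩ C).card
      = A.card + B.card + C.card + (A ∩ B ∩ C).card + (Finset.univ \ (A ∪ B ∪ C)).card := by
  have e2 := Finset.card_inter_add_card_sdiff (A ∩ B) C
  have e3 := Finset.card_inter_add_card_sdiff (A ∩ C) B
  have r3 : (A ∩ C) ∩ B = A ∩ B ∩ C := by ext a; simp only [mem_inter]; tauto
  rw [r3] at e3
  have e4 := Finset.card_inter_add_card_sdiff (B ∩ C) A
  have r4 : (B ∩ C) ∩ A = A ∩ B ∩ C := by ext a; simp only [mem_inter]; tauto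
  rw [r4] at e4
  have e5a := Finset.card_inter_add_card_sdiff A (B ∪ C)
  have e5b := Finset.card_union_add_card_inter (A ∩ B) (A ∩ C)
  have r5a : (A ∩ B) ∪ (A ∩ C) = A ∩ (B ∪ C) := by
    ext a; simp only [mem_inter, mem_union]; tauto
  have r5b : (A ∩ B) ∩ (A ∩ C) = A ∩ B ∩ C := by ext a; simp only [mem_inter]; tauto
  rw [r5a, r5b] at e5b
  have e6a := Finset.card_inter_add_card_sdiff B (A ∪ C)
  have e6b := Finset.card_union_add_card_inter (A ∩ B) (B ∩ C)
  have r6a : (A ∩ B) ∪ (B ∩ C) = B ∩ (A ∪ C) := by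
    ext a; simp only [mem_inter, mem_union]; tauto
  have r6b : (A ∩ B) ∩ (B ∩ C) = A ∩ B ∩ C := by ext a; simp only [mem_inter]; tauto
  rw [r6a, r6b] at e6b
  have e7a := Finset.card_inter_add_card_sdiff C (A ∪ B)
  have e7b := Finset.card_union_add_card_inter (A ∩ C) (B ∩ C)
  have r7a : (A ∩ C) ∪ (B ∩ C) = C ∩ (A ∪ B) := by
    ext a; simp only [mem_inter, mem_union]; tauto
  have r7b : (A ∩ C) ∩ (B ∩ C) = A ∩ B ∩ C := by ext a; simp only [mem_inter]; tauto
  rw [r7a, r7b] at e7b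
  have e8a := Finset.card_union_add_card_inter (A ∪ B) C
  have e8b := Finset.card_union_add_card_inter A B
  have r8 : (A ∪ B) ∩ C = (A ∩ C) ∪ (B ∩ C) := by
    ext a; simp only [mem_inter, mem_union]; tauto
  rw [r8] at e8a
  have e8d := Finset.card_union_add_card_inter (A ∩ C) (B ∩ C)
  rw [r7b] at e8d
  have e8c : (A ∪ B ∪ C).card + (Finset.univ \ (A ∪ B ∪ C)).card = Fintype.card α := by
    rw [← Finset.compl_eq_univ_sdiff, Finset.card_add_card_compl]
  omega

lemma cells_eq {α : Type*} [DecidableEq α] [Fintype α] (A B C A' B' C' : Finset α)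
    (hA : A.card = A'.card) (hB : B.card = B'.card) (hC : C.card = C'.card)
    (hAB : (A ∩ B).card = (A' ∩ B').card) (hAC : (A ∩ C).card = (A' ∩ C').card)
    (hBC : (B ∩ C).card = (B' ∩ C').card)
    (hABC : (A ∩ B ∩ C).card = (A' ∩ B' ∩ C').card) :
    (A ∩ B ∩ C).card = (A' ∩ B' ∩ C').card ∧
    ((A ∩ B) \ C).card = ((A' ∩ B') \ C').card ∧
    ((A ∩ C) \ B).card = ((A' ∩ C') \ B').card ∧
    ((B ∩ C) \ A).card = ((B' ∩ C') \ A').card ∧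
    (A \ (B ∪ C)).card = (A' \ (B' ∪ C')).card ∧
    (B \ (A ∪ C)).card = (B' \ (A' ∪ C')).card ∧
    (C \ (A ∪ B)).card = (C' \ (A' ∪ B')).card ∧
    (Finset.univ \ (A ∪ B ∪ C)).card = (Finset.univ \ (A' ∪ B' ∪ C')).card := by
  obtain ⟨a1, a2, a3, a4, a5, a6, a7⟩ := sys A B C
  obtain ⟨b1, b2, b3, b4, b5, b6, b7⟩ := sys A' B' C'
  omega

/-- The quadruple `ρ(y,z) = (|x0∩y|, |x0∩z|, |y∩z|, |x0∩y∩z|)`, with entries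
viewed as integers. -/
def rho {n : ℕ} (x0 y z : Finset (Fin n)) : ℤ × ℤ × ℤ × ℤ :=
  (((x0 ∩ y).card : ℤ), ((x0 ∩ z).card : ℤ), ((y ∩ z).card : ℤ),
    ((x0 ∩ y ∩ z).card : ℤ))

theorem stmt_6 (m : ℕ) (hm : 1 ≤ m) (x0 : Finset (Fin (2*m+1))) (hx0 : x0.card = m)
    (y z y' z' : Finset (Fin (2*m+1)))
    (hy : y.card = m) (hz : z.card = m) (hy' : y'.card = m) (hz' : z'.card = m) :
    (∃ σ : Equiv.Perm (Fin (2*m+1)),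
        x0.image σ = x0 ∧ y.image σ = y' ∧ z.image σ = z') ↔
      rho x0 y z = rho x0 y' z' := by
  constructor
  · rintro ⟨σ, h0, h1, h2⟩
    have inj : Function.Injective σ := σ.injective
    have c1 : (x0 ∩ y').card = (x0 ∩ y).card := by
      conv_lhs => rw [← h0, ← h1, ← Finset.image_inter x0 y inj,
        Finset.card_image_of_injective _ inj]
    have c2 : (x0 ∩ z').card = (x0 ∩ z).card := by
      conv_lhs => rw [← h0, ← h2, ← Finset.image_inter x0 z inj,
        Finset.card_image_of_injective _ inj]
    have c3 : (y' ∩ z').card = (y ∩ z).card := by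
      conv_lhs => rw [← h1, ← h2, ← Finset.image_inter y z inj,
        Finset.card_image_of_injective _ inj]
    have c4 : (x0 ∩ y' ∩ z').card = (x0 ∩ y ∩ z).card := by
      conv_lhs => rw [← h0, ← h1, ← h2, ← Finset.image_inter x0 y inj,
        ← Finset.image_inter (x0 ∩ y) z inj, Finset.card_image_of_injective _ inj]
    simp only [rho, Prod.mk.injEq, Nat.cast_inj]
    exact ⟨c1.symm, c2.symm, c3.symm, c4.symm⟩
  · intro h
    simp only [rho, Prod.mk.injEq, Nat.cast_inj] at h
    obtain ⟨h1, h2, h3, h4⟩ := h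
    obtain ⟨c1, c2, c3, c4, c5, c6, c7, c8⟩ :=
      cells_eq x0 y z x0 y' z' rfl (hy.trans hy'.symm) (hz.trans hz'.symm) h1 h2 h3 h4
    set f : Fin (2*m+1) → Bool × Bool × Bool :=
      fun a => (decide (a ∈ x0), decide (a ∈ y), decide (a ∈ z)) with hf
    set g : Fin (2*m+1) → Bool × Bool × Bool :=
      fun a => (decide (a ∈ x0), decide (a ∈ y'), decide (a ∈ z')) with hg
    have key : ∀ b, Fintype.card {a // f a = b} = Fintype.card {a // g a = b} := by
      intro b
      rw [Fintype.card_subtype, Fintype.card_subtype]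
      rcases b with ⟨b1, b2, b3⟩
      cases b1 <;> cases b2 <;> cases b3
      · rw [show (univ.filter (fun a => f a = (false, false, false))) = univ \ (x0 ∪ y ∪ z) from by
            ext a; simp [hf, Prod.ext_iff]; try tauto,
          show (univ.filter (fun a => g a = (false, false, false))) = univ \ (x0 ∪ y' ∪ z') from by
            ext a; simp [hg, Prod.ext_iff]; try tauto]
        exact c8
      · rw [show (univ.filter (fun a => f a = (false, false, true))) = z \ (x0 ∪ y) from by
            ext a; simp [hf, Prod.ext_iff]; try tauto,
          show (univ.filter (fun a => g a = (false, false, true))) = z' \ (x0 ∪ y') from by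
            ext a; simp [hg, Prod.ext_iff]; try tauto]
        exact c7
      · rw [show (univ.filter (fun a => f a = (false, true, false))) = y \ (x0 ∪ z) from by
            ext a; simp [hf, Prod.ext_iff]; try tauto,
          show (univ.filter (fun a => g a = (false, true, false))) = y' \ (x0 ∪ z') from by
            ext a; simp [hg, Prod.ext_iff]; try tauto]
        exact c6
      · rw [show (univ.filter (fun a => f a = (false, true, true))) = (y ∩ z) \ x0 from by
            ext a; simp [hf, Prod.ext_iff]; try tauto,
          show (univ.filter (fun a => g a = (false, true, true))) = (y' ∩ z') \ x0 from by
            ext a; simp [hg, Prod.ext_iff]; try tauto]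
        exact c4
      · rw [show (univ.filter (fun a => f a = (true, false, false))) = x0 \ (y ∪ z) from by
            ext a; simp [hf, Prod.ext_iff]; try tauto,
          show (univ.filter (fun a => g a = (true, false, false))) = x0 \ (y' ∪ z') from by
            ext a; simp [hg, Prod.ext_iff]; try tauto]
        exact c5
      · rw [show (univ.filter (fun a => f a = (true, false, true))) = (x0 ∩ z) \ y from by
            ext a; simp [hf, Prod.ext_iff]; try tauto,
          show (univ.filter (fun a => g a = (true, false, true))) = (x0 ∩ z') \ y' from by
            ext a; simp [hg, Prod.ext_iff]; try tauto]
        exact c3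
      · rw [show (univ.filter (fun a => f a = (true, true, false))) = (x0 ∩ y) \ z from by
            ext a; simp [hf, Prod.ext_iff]; try tauto,
          show (univ.filter (fun a => g a = (true, true, false))) = (x0 ∩ y') \ z' from by
            ext a; simp [hg, Prod.ext_iff]; try tauto]
        exact c2
      · rw [show (univ.filter (fun a => f a = (true, true, true))) = x0 ∩ y ∩ z from by
            ext a; simp [hf, Prod.ext_iff]; try tauto,
          show (univ.filter (fun a => g a = (true, true, true))) = x0 ∩ y' ∩ z' from by
            ext a; simp [hg, Prod.ext_iff]; try tauto]
        exact c1
    let σ : Equiv.Perm (Fin (2*m+1)) :=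
      Equiv.ofFiberEquiv (f := f) (g := g) (fun b => Fintype.equivOfCardEq (key b))
    have hσ : ∀ a, g (σ a) = f a := fun a => Equiv.ofFiberEquiv_map _ a
    have hmem : ∀ a : Fin (2*m+1),
        (σ a ∈ x0 ↔ a ∈ x0) ∧ (σ a ∈ y' ↔ a ∈ y) ∧ (σ a ∈ z' ↔ a ∈ z) := by
      intro a
      have := hσ a
      simp only [hf, hg, Prod.mk.injEq, decide_eq_decide] at this
      tauto
    have injσ : Function.Injective σ := σ.injective
    refine ⟨σ, ?_, ?_, ?_⟩
    · apply Finset.eq_of_subset_of_card_le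
      · intro b hb
        rw [Finset.mem_image] at hb
        obtain ⟨a, ha, rfl⟩ := hb
        exact ((hmem a).1).mpr ha
      · rw [Finset.card_image_of_injective _ injσ]
    · apply Finset.eq_of_subset_of_card_le
      · intro b hb
        rw [Finset.mem_image] at hb
        obtain ⟨a, ha, rfl⟩ := hb
        exact ((hmem a).2.1).mpr ha
      · rw [Finset.card_image_of_injective _ injσ, hy, hy']
    · apply Finset.eq_of_subset_of_card_le
      · intro b hb
        rw [Finset.mem_image] at hb
        obtain ⟨a, ha, rfl⟩ := hb
        exact ((hmem a).2.2).mpr ha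
      · rw [Finset.card_image_of_injective _ injσ, hz, hz']
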